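/- The space ℤAA(ℝ; X) of ℤ-almost automorphic functions with values in a Banach space X is a Banach space under the norm of uniform convergence: if f_k ∈ ℤAA(ℝ; X) converge uniformly on ℝ to f, then f ∈ ℤAA(ℝ; X). -/

import Mathlib

open Filter Topology

variable {X : Type*} [NormedAddCommGroup X]

/-- `f ∈ PC_ℤ(ℝ; X)`: continuous on each `[n, n+1)`, `n ∈ ℤ`, with a left
limit at each integer. -/
def PCZ (f : ℝ → X) : Prop :=
  (∀ n : ℤ, ContinuousOn f (Set.Ico (n : ℝ) ((n : ℝ) + 1))) ∧
  ∀ n : ℤ, ∃ L : X, Filter.Tendsto f (nhdsWithin (n : ℝ) (Set.Iio (n : ℝ))) (nhds L)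

/-- `f` is ℤ-almost automorphic: `f ∈ PC_ℤ(ℝ;X)` and for every sequence of
integers there are a subsequence and a function `g` with the pointwise
bi-limit property. -/
def ZAA (f : ℝ → X) : Prop :=
  PCZ f ∧ ∀ s : ℕ → ℤ, ∃ (φ : ℕ → ℕ) (g : ℝ → X), StrictMono φ ∧
    (∀ t : ℝ, Filter.Tendsto (fun n => f (t + (s (φ n) : ℝ))) Filter.atTop (nhds (g t))) ∧
    (∀ t : ℝ, Filter.Tendsto (fun n => g (t - (s (φ n) : ℝ))) Filter.atTop (nhds (f t)))

private lemma unif_limit_exists [CompleteSpace X] {f : ℕ → ℝ → X} {g : ℝ → X}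
    (hconv : TendstoUniformly f g atTop) {F : Filter ℝ} [F.NeBot]
    (h : ∀ k, ∃ L, Tendsto (f k) F (nhds L)) : ∃ L, Tendsto g F (nhds L) := by
  choose L hL using h
  have hm := Metric.tendstoUniformly_iff.mp hconv
  have hcau : CauchySeq L := by
    rw [Metric.cauchySeq_iff]
    intro ε hε
    obtain ⟨N, hN⟩ := eventually_atTop.mp (hm (ε/4) (by linarith))
    refine ⟨N, fun k hk j hj => ?_⟩
    have hd : Tendsto (fun t => dist (f k t) (f j t)) F (nhds (dist (L k) (L j))) :=
      (hL k).dist (hL j)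
    have : dist (L k) (L j) ≤ ε/2 := by
      refine le_of_tendsto hd (Eventually.of_forall fun t => ?_)
      have h1 := hN k hk t
      have h2 := hN j hj t
      have := dist_triangle_left (f k t) (f j t) (g t)
      linarith
    linarith
  obtain ⟨Linf, hLinf⟩ := cauchySeq_tendsto_of_complete hcau
  refine ⟨Linf, Metric.tendsto_nhds.2 fun ε hε => ?_⟩
  have h1 : ∀ᶠ k in atTop, dist (L k) Linf < ε/3 :=
    Metric.tendsto_nhds.mp hLinf (ε/3) (by linarith)
  have h2 : ∀ᶠ k in atTop, ∀ t, dist (g t) (f k t) < ε/3 := hm (ε/3) (by linarith)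
  obtain ⟨k, hk1, hk2⟩ := (h1.and h2).exists
  have h3 : ∀ᶠ t in F, dist (f k t) (L k) < ε/3 :=
    Metric.tendsto_nhds.mp (hL k) (ε/3) (by linarith)
  filter_upwards [h3] with t ht
  calc dist (g t) Linf ≤ dist (g t) (f k t) + dist (f k t) (L k) + dist (L k) Linf :=
        dist_triangle4 _ _ _ _
    _ < ε := by have := hk2 t; linarith

private def psiAux (φF : ℕ → (ℕ → ℤ) → (ℕ → ℕ)) (s : ℕ → ℤ) : ℕ → ℕ → ℕ
  | 0 => φF 0 s
  | (k+1) => psiAux φF s k ∘ φF (k+1) (s ∘ psiAux φF s k)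

private def gAux (φF : ℕ → (ℕ → ℤ) → (ℕ → ℕ)) (gF : ℕ → (ℕ → ℤ) → (ℝ → X))
    (s : ℕ → ℤ) : ℕ → ℝ → X
  | 0 => gF 0 s
  | (k+1) => gF (k+1) (s ∘ psiAux φF s k)

/-- `ℤAA(ℝ;X)` is a Banach space under the norm of uniform convergence: a
uniform limit of ℤ-almost automorphic functions is ℤ-almost automorphic. -/
theorem stmt6 [CompleteSpace X] (f : ℕ → ℝ → X) (g : ℝ → X)
    (hf : ∀ k, ZAA (f k)) (hconv : TendstoUniformly f g atTop) : ZAA g := by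
  refine ⟨⟨?_, ?_⟩, ?_⟩
  · intro n
    exact hconv.tendstoUniformlyOn.continuousOn
      (Eventually.of_forall fun k => (hf k).1.1 n).frequently
  · intro n
    exact unif_limit_exists hconv (fun k => (hf k).1.2 n)
  · intro s
    choose φF gF hmono hfor hback using fun k (σ : ℕ → ℤ) => (hf k).2 σ
    set Ψ : ℕ → ℕ → ℕ := psiAux φF s with hΨdef
    set G : ℕ → ℝ → X := gAux φF gF s with hGdef
    have hΨmono : ∀ k, StrictMono (Ψ k) := by
      intro k; induction k with
      | zero => exact hmono 0 s
      | succ k ih => exact ih.comp (hmono _ _)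
    have hGfor : ∀ k t, Tendsto (fun n => f k (t + (s (Ψ k n) : ℝ))) atTop (nhds (G k t)) := by
      intro k t
      cases k with
      | zero => exact hfor 0 s t
      | succ k => exact hfor (k+1) (s ∘ Ψ k) t
    have hGback : ∀ k t, Tendsto (fun n => G k (t - (s (Ψ k n) : ℝ))) atTop (nhds (f k t)) := by
      intro k t
      cases k with
      | zero => exact hback 0 s t
      | succ k => exact hback (k+1) (s ∘ Ψ k) t
    have hC : ∀ k m, k ≤ m → ∃ ρ : ℕ → ℕ, StrictMono ρ ∧ ∀ n, Ψ m n = Ψ k (ρ n) := by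
      intro k m hkm
      induction m, hkm using Nat.le_induction with
      | base => exact ⟨id, strictMono_id, fun n => rfl⟩
      | succ m hkm ih =>
        obtain ⟨ρ, hρ, hρeq⟩ := ih
        exact ⟨ρ ∘ φF (m+1) (s ∘ Ψ m), hρ.comp (hmono _ _), fun n => hρeq _⟩
    set φ : ℕ → ℕ := fun n => Ψ n n with hφdef
    have hφmono : StrictMono φ := by
      refine strictMono_nat_of_lt_succ fun n => ?_
      calc Ψ n n < Ψ n (n+1) := hΨmono n (Nat.lt_succ_self n)
        _ ≤ Ψ n (φF (n+1) (s ∘ Ψ n) (n+1)) := (hΨmono n).monotone (hmono _ _).le_apply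
        _ = Ψ (n+1) (n+1) := rfl
    have hjx : ∀ k, ∃ j : ℕ → ℕ, ∀ n, k ≤ n → n ≤ j n ∧ φ n = Ψ k (j n) := by
      intro k
      have hj : ∀ n, k ≤ n → ∃ j, n ≤ j ∧ φ n = Ψ k j := fun n hn => by
        obtain ⟨ρ, hρ, hρeq⟩ := hC k n hn
        exact ⟨ρ n, hρ.le_apply, hρeq n⟩
      choose! j hj1 hj2 using hj
      exact ⟨j, fun n hn => ⟨hj1 n hn, hj2 n hn⟩⟩
    have hcomp : ∀ k (a : ℕ → X) (L : X), Tendsto (fun n => a (Ψ k n)) atTop (nhds L) →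
        Tendsto (fun n => a (φ n)) atTop (nhds L) := by
      intro k a L ha
      obtain ⟨j, hj⟩ := hjx k
      have hjt : Tendsto j atTop atTop :=
        tendsto_atTop_mono' atTop (eventually_atTop.2 ⟨k, fun n hn => (hj n hn).1⟩) tendsto_id
      refine Tendsto.congr' ?_ (ha.comp hjt)
      filter_upwards [eventually_ge_atTop k] with n hn
      simp only [Function.comp, ← (hj n hn).2]
    have hEfor : ∀ k t, Tendsto (fun n => f k (t + (s (φ n) : ℝ))) atTop (nhds (G k t)) :=
      fun k t => hcomp k (fun m => f k (t + (s m : ℝ))) _ (hGfor k t)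
    have hEback : ∀ k t, Tendsto (fun n => G k (t - (s (φ n) : ℝ))) atTop (nhds (f k t)) :=
      fun k t => hcomp k (fun m => G k (t - (s m : ℝ))) _ (hGback k t)
    have hm := Metric.tendstoUniformly_iff.mp hconv
    have hcauchy : ∀ t : ℝ, CauchySeq (fun n => g (t + (s (φ n) : ℝ))) := by
      intro t
      rw [Metric.cauchySeq_iff]
      intro ε hε
      obtain ⟨k, hk⟩ := (hm (ε/4) (by linarith)).exists
      have hcs := (hEfor k t).cauchySeq
      rw [Metric.cauchySeq_iff] at hcs
      obtain ⟨N, hN⟩ := hcs (ε/4) (by linarith)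
      refine ⟨N, fun a ha b hb => ?_⟩
      calc dist (g (t + (s (φ a) : ℝ))) (g (t + (s (φ b) : ℝ)))
          ≤ dist (g (t + (s (φ a) : ℝ))) (f k (t + (s (φ a) : ℝ)))
            + dist (f k (t + (s (φ a) : ℝ))) (f k (t + (s (φ b) : ℝ)))
            + dist (f k (t + (s (φ b) : ℝ))) (g (t + (s (φ b) : ℝ))) := dist_triangle4 _ _ _ _
        _ < ε := by
            have h1 := hk (t + (s (φ a) : ℝ))
            have h2 := hN a ha b hb
            have h3 := hk (t + (s (φ b) : ℝ))
            rw [dist_comm] at h3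
            linarith
    have hlim : ∀ t, ∃ y, Tendsto (fun n => g (t + (s (φ n) : ℝ))) atTop (nhds y) :=
      fun t => cauchySeq_tendsto_of_complete (hcauchy t)
    choose gt hgt using hlim
    refine ⟨φ, gt, hφmono, hgt, ?_⟩
    have hD : ∀ k ε, (∀ u, dist (g u) (f k u) < ε) → ∀ u, dist (gt u) (G k u) ≤ ε := by
      intro k ε hku u
      have h1 : Tendsto (fun n => dist (g (u + (s (φ n) : ℝ))) (f k (u + (s (φ n) : ℝ))))
          atTop (nhds (dist (gt u) (G k u))) := (hgt u).dist (hEfor k u)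
      exact le_of_tendsto h1 (Eventually.of_forall fun n => (hku _).le)
    intro t
    rw [Metric.tendsto_atTop]
    intro ε hε
    obtain ⟨k, hk⟩ := (hm (ε/4) (by linarith)).exists
    have hD' := hD k (ε/4) hk
    have hb := Metric.tendsto_atTop.mp (hEback k t) (ε/4) (by linarith)
    obtain ⟨N, hN⟩ := hb
    refine ⟨N, fun n hn => ?_⟩
    calc dist (gt (t - (s (φ n) : ℝ))) (g t)
        ≤ dist (gt (t - (s (φ n) : ℝ))) (G k (t - (s (φ n) : ℝ)))
          + dist (G k (t - (s (φ n) : ℝ))) (f k t) + dist (f k t) (g t) := dist_triangle4 _ _ _ _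
      _ < ε := by
          have h1 := hD' (t - (s (φ n) : ℝ))
          have h2 := hN n hn
          have h3 := hk t
          rw [dist_comm] at h3
          linarith
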